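/- The function x ↦ (x·R(x,x) - 2)/x² is strictly increasing on (0, ∞) with range (-π²/3, 0), where R(x,x) = -2ψ(x) - 2γ. -/

import Mathlib

noncomputable def digamma (x : ℝ) : ℝ := deriv (fun y : ℝ => Real.log (Real.Gamma y)) x

noncomputable def Rxx (x : ℝ) : ℝ := -2 * digamma x - 2 * Real.eulerMascheroniConstant

open Real Filter Topology Set

lemma dg_diff {x : ℝ} (hx : 0 < x) :
    DifferentiableAt ℝ (fun y : ℝ => Real.log (Real.Gamma y)) x := by
  refine ((Real.differentiableAt_Gamma ?_).log (Real.Gamma_ne_zero ?_)) <;>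
  exact fun m => ((neg_nonpos.mpr m.cast_nonneg).trans_lt hx).ne'

lemma dg_rec {x : ℝ} (hx : 0 < x) : digamma (x + 1) = digamma x + 1 / x := by
  unfold digamma
  rw [← deriv_comp_add_const, one_div, ← Real.deriv_log,
    ← deriv_add (dg_diff hx) (Real.differentiableAt_log hx.ne')]
  apply Filter.EventuallyEq.deriv_eq
  filter_upwards [eventually_gt_nhds hx] with y hy
  simp only [Real.Gamma_add_one hy.ne', Real.log_mul hy.ne'
    (Real.Gamma_pos_of_pos hy).ne', add_comm, Pi.add_apply]

lemma dg_sum {x : ℝ} (hx : 0 < x) (n : ℕ) :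
    digamma (x + n) = digamma x + ∑ k ∈ Finset.range n, 1 / (x + k) := by
  induction n with
  | zero => simp
  | succ n ih =>
    have h1 : x + (n + 1 : ℕ) = (x + n) + 1 := by push_cast; ring
    rw [h1, dg_rec (by positivity), ih, Finset.sum_range_succ]
    ring

lemma dg_lb {y : ℝ} (hy : 0 < y) : Real.log y ≤ digamma (y + 1) := by
  have hc := Real.convexOn_log_Gamma
  have h := hc.slope_le_deriv (Set.mem_Ioi.mpr hy)
    (Set.mem_Ioi.mpr (by linarith : (0:ℝ) < y + 1)) (by linarith)
    (dg_diff (by linarith : (0:ℝ) < y + 1))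
  rw [slope_def_field] at h
  simp only [Function.comp_apply] at h
  rw [Real.Gamma_add_one hy.ne', Real.log_mul hy.ne'
    (Real.Gamma_pos_of_pos hy).ne'] at h
  have h2 : (Real.log y + Real.log (Real.Gamma y) - Real.log (Real.Gamma y)) /
      (y + 1 - y) = Real.log y := by ring_nf
  rw [h2] at h
  exact h

lemma dg_ub {y : ℝ} (hy : 0 < y) : digamma (y + 1) ≤ Real.log (y + 1) := by
  have hc := Real.convexOn_log_Gamma
  have h := hc.deriv_le_slope (Set.mem_Ioi.mpr (by linarith : (0:ℝ) < y + 1))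
    (Set.mem_Ioi.mpr (by linarith : (0:ℝ) < y + 2)) (by linarith)
    (dg_diff (by linarith : (0:ℝ) < y + 1))
  rw [slope_def_field] at h
  simp only [Function.comp_apply] at h
  have hy1 : (0:ℝ) < y + 1 := by linarith
  have he : y + 2 = (y + 1) + 1 := by ring
  rw [he, Real.Gamma_add_one hy1.ne', Real.log_mul hy1.ne'
    (Real.Gamma_pos_of_pos hy1).ne'] at h
  have h2 : (Real.log (y + 1) + Real.log (Real.Gamma (y + 1)) -
      Real.log (Real.Gamma (y + 1))) / (y + 1 + 1 - (y + 1)) = Real.log (y + 1) := by ring_nf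
  rw [h2] at h
  exact h

lemma log_shift_tendsto {c : ℝ} (hc : 0 ≤ c) :
    Tendsto (fun n : ℕ => Real.log (c + n) - Real.log n) atTop (𝓝 0) := by
  have h1 : Tendsto (fun n : ℕ => c / n + 1) atTop (𝓝 1) := by
    simpa using (tendsto_const_div_atTop_nhds_zero_nat c).add tendsto_const_nhds
  have h2 : Tendsto (fun n : ℕ => Real.log (c / n + 1)) atTop (𝓝 0) := by
    have := (Real.continuousAt_log one_ne_zero).tendsto.comp h1
    simpa [Function.comp_def] using this
  apply h2.congr'
  filter_upwards [eventually_gt_atTop 0] with n hn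
  have hn' : (0:ℝ) < n := by exact_mod_cast hn
  rw [← Real.log_div (by positivity) hn'.ne']
  congr 1
  field_simp

lemma dg_tendsto {x : ℝ} (hx : 0 < x) :
    Tendsto (fun n : ℕ => digamma (x + n + 1) - Real.log n) atTop (𝓝 0) := by
  apply tendsto_of_tendsto_of_tendsto_of_le_of_le (log_shift_tendsto hx.le)
    (log_shift_tendsto (by linarith : (0:ℝ) ≤ x + 1))
  · intro n
    have := dg_lb (by positivity : (0:ℝ) < x + n)
    simp only [sub_le_sub_iff_right]
    linarith
  · intro n
    have := dg_ub (by positivity : (0:ℝ) < x + n)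
    have he : x + n + 1 = (x + n) + 1 := by ring
    simp only [sub_le_sub_iff_right]
    calc digamma (x + n + 1) ≤ Real.log (x + n + 1) := by rw [he]; linarith
      _ = Real.log ((x + 1) + n) := by ring_nf

lemma dg_hasSum {x : ℝ} (hx : 0 < x) :
    HasSum (fun n : ℕ => x / ((n + 1) * (n + 1 + x)))
      (digamma x + Real.eulerMascheroniConstant + 1 / x) := by
  have hnn : ∀ n : ℕ, 0 ≤ x / ((n + 1) * (n + 1 + x)) := by
    intro n; positivity
  rw [hasSum_iff_tendsto_nat_of_nonneg hnn]
  have key : ∀ n : ℕ, ∑ k ∈ Finset.range n, x / ((k + 1) * (k + 1 + x)) =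
      ((harmonic n : ℝ) - Real.log n) - (digamma (x + n + 1) - Real.log n) +
        (digamma x + 1 / x) := by
    intro n
    have hsum : digamma (x + (n + 1 : ℕ)) = digamma x + ∑ k ∈ Finset.range (n + 1), 1 / (x + k) :=
      dg_sum hx (n + 1)
    have hpeel : ∑ k ∈ Finset.range (n + 1), 1 / (x + (k : ℝ)) =
        (∑ k ∈ Finset.range n, 1 / (x + (k + 1 : ℕ))) + 1 / (x + (0 : ℕ)) :=
      Finset.sum_range_succ' _ n
    have hharm : (harmonic n : ℝ) = ∑ k ∈ Finset.range n, 1 / ((k : ℝ) + 1) := by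
      rw [harmonic]
      push_cast
      simp [one_div]
    have hterm : ∀ k ∈ Finset.range n, x / (((k : ℝ) + 1) * (k + 1 + x)) =
        1 / ((k : ℝ) + 1) - 1 / (x + ((k : ℕ) + 1 : ℕ)) := by
      intro k _
      have h1 : ((k : ℝ) + 1) ≠ 0 := by positivity
      have h2 : ((k : ℝ) + 1 + x) ≠ 0 := by positivity
      push_cast
      rw [div_sub_div _ _ h1 (by linarith : x + ((k : ℝ) + 1) ≠ 0)]
      rw [div_eq_div_iff (by positivity) (by positivity)]
      ring
    rw [Finset.sum_congr rfl hterm, Finset.sum_sub_distrib, ← hharm]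
    have he : x + (n + 1 : ℕ) = x + n + 1 := by push_cast; ring
    rw [he] at hsum
    rw [hpeel] at hsum
    simp only [Nat.cast_zero, add_zero] at hsum
    have : ∑ k ∈ Finset.range n, 1 / (x + ((k : ℕ) + 1 : ℕ)) =
        digamma (x + n + 1) - digamma x - 1 / x := by linarith
    rw [this]
    ring
  simp only [key]
  have h1 := Real.tendsto_harmonic_sub_log
  have h2 := dg_tendsto hx
  have h3 := (h1.sub h2).add (tendsto_const_nhds (x := digamma x + 1 / x))
  rw [show digamma x + Real.eulerMascheroniConstant + 1 / x =
    Real.eulerMascheroniConstant - 0 + (digamma x + 1 / x) by ring]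
  exact h3

lemma dg_hasSum' {x : ℝ} (hx : 0 < x) :
    HasSum (fun n : ℕ => 1 / ((n + 1) * (n + 1 + x)))
      ((digamma x + Real.eulerMascheroniConstant + 1 / x) / x) := by
  have h := (dg_hasSum hx).mul_left x⁻¹
  have he : ∀ n : ℕ, x⁻¹ * (x / ((n + 1) * ((n:ℝ) + 1 + x))) =
      1 / ((n + 1) * ((n:ℝ) + 1 + x)) := by
    intro n
    field_simp
  rw [div_eq_inv_mul]
  exact h.congr_fun fun n => (he n).symm

noncomputable def Hfun (x : ℝ) : ℝ := ∑' n : ℕ, 1 / (((n : ℝ) + 1) * ((n : ℝ) + 1 + x))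

lemma f_eq_H {x : ℝ} (hx : 0 < x) :
    (x * Rxx x - 2) / x ^ 2 = -2 * Hfun x := by
  have h := (dg_hasSum' hx).tsum_eq
  rw [Hfun, h, Rxx]
  field_simp
  ring

lemma Hfun_summand_lt {x : ℝ} (hx : 0 < x) (n : ℕ) :
    1 / (((n : ℝ) + 1) * ((n : ℝ) + 1 + x)) < 1 / (((n : ℝ) + 1) ^ 2) := by
  apply div_lt_div_of_pos_left one_pos (by positivity)
  have : ((n : ℝ) + 1) ^ 2 = ((n : ℝ) + 1) * ((n : ℝ) + 1) := by ring
  rw [this]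
  exact mul_lt_mul_of_pos_left (by linarith) (by positivity)

lemma basel : HasSum (fun n : ℕ => 1 / (((n : ℝ) + 1) ^ 2)) (Real.pi ^ 2 / 6) := by
  have h := hasSum_zeta_two
  have h2 := (hasSum_nat_add_iff' (f := fun n : ℕ => (1 : ℝ) / (n : ℝ) ^ 2) 1).mpr h
  simp only [Finset.range_one, Finset.sum_singleton, Nat.cast_zero] at h2
  norm_num at h2
  convert h2 using 2 with n
  push_cast
  · rfl
  · simp

lemma basel_summable : Summable (fun n : ℕ => 1 / (((n : ℝ) + 1) ^ 2)) := basel.summable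

lemma Hfun_lt {x : ℝ} (hx : 0 < x) : Hfun x < Real.pi ^ 2 / 6 := by
  rw [Hfun, ← basel.tsum_eq]
  exact Summable.tsum_lt_tsum_of_nonneg (fun n => by positivity)
    (fun n => (Hfun_summand_lt hx n).le) (Hfun_summand_lt hx 0) basel_summable

lemma Hfun_pos {x : ℝ} (hx : 0 < x) : 0 < Hfun x := by
  have hs := (dg_hasSum' hx).summable
  refine Summable.tsum_pos hs (fun n => by positivity) 0 (by positivity)

lemma Hfun_anti {x y : ℝ} (hx : 0 < x) (hxy : x < y) : Hfun y < Hfun x := by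
  have hy : 0 < y := hx.trans hxy
  rw [Hfun, Hfun]
  have hle : ∀ n : ℕ, 1 / (((n:ℝ) + 1) * ((n:ℝ) + 1 + y)) ≤
      1 / (((n:ℝ) + 1) * ((n:ℝ) + 1 + x)) := by
    intro n
    apply one_div_le_one_div_of_le (by positivity)
    exact mul_le_mul_of_nonneg_left (by linarith) (by positivity)
  refine Summable.tsum_lt_tsum_of_nonneg (i := 0) (fun n => by positivity) hle ?_
    (dg_hasSum' hx).summable
  apply one_div_lt_one_div_of_lt (by positivity)
  exact mul_lt_mul_of_pos_left (by linarith) (by positivity)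

lemma Hfun_continuousOn : ContinuousOn Hfun (Set.Ioi 0) := by
  unfold Hfun
  apply continuousOn_tsum (u := fun n : ℕ => 1 / (((n : ℝ) + 1) ^ 2))
    (fun n => ?_) basel_summable (fun n x hx => ?_)
  · apply ContinuousOn.div continuousOn_const
    · fun_prop
    · intro x hx
      have hx' : (0:ℝ) < x := hx
      positivity
  · have hx' : (0:ℝ) < x := hx
    rw [Real.norm_eq_abs, abs_of_nonneg (by positivity)]
    exact (Hfun_summand_lt hx' n).le

lemma Hfun_tendsto_atTop : Tendsto Hfun atTop (𝓝 0) := by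
  unfold Hfun
  rw [show (𝓝 (0:ℝ)) = 𝓝 (∑' _ : ℕ, (0:ℝ)) by simp]
  apply tendsto_tsum_of_dominated_convergence basel_summable
  · intro n
    have ht : Tendsto (fun x : ℝ => ((n : ℝ) + 1) * ((n : ℝ) + 1 + x)) atTop atTop := by
      apply Tendsto.const_mul_atTop (by positivity)
      exact tendsto_atTop_add_const_left _ _ tendsto_id
    simpa [one_div, mul_inv, mul_comm, Function.comp_def] using tendsto_inv_atTop_zero.comp ht
  · filter_upwards [eventually_gt_atTop (0:ℝ)] with x hx n
    rw [Real.norm_eq_abs, abs_of_nonneg (by positivity)]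
    exact (Hfun_summand_lt hx n).le

lemma Hfun_tendsto_zero : Tendsto Hfun (𝓝[>] (0:ℝ)) (𝓝 (Real.pi ^ 2 / 6)) := by
  unfold Hfun
  rw [show (𝓝 (Real.pi ^ 2 / 6)) = 𝓝 (∑' n : ℕ, 1 / (((n : ℝ) + 1) ^ 2)) by
    rw [basel.tsum_eq]]
  apply tendsto_tsum_of_dominated_convergence basel_summable
  · intro n
    have hc : ContinuousAt (fun x : ℝ => 1 / (((n : ℝ) + 1) * ((n : ℝ) + 1 + x))) 0 := by
      apply ContinuousAt.div continuousAt_const (by fun_prop)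
      positivity
    have := hc.continuousWithinAt (s := Set.Ioi 0)
    have h2 := this.tendsto
    convert h2 using 2 <;> ring
  · filter_upwards [self_mem_nhdsWithin] with x hx n
    have hx' : (0:ℝ) < x := hx
    rw [Real.norm_eq_abs, abs_of_nonneg (by positivity)]
    exact (Hfun_summand_lt hx' n).le

theorem stmt_16 :
    StrictMonoOn (fun x : ℝ => (x * Rxx x - 2) / x ^ 2) (Set.Ioi 0) ∧
      (fun x : ℝ => (x * Rxx x - 2) / x ^ 2) '' Set.Ioi 0 =
        Set.Ioo (-(Real.pi ^ 2 / 3)) 0 := by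
  have hmono : StrictMonoOn (fun x : ℝ => (x * Rxx x - 2) / x ^ 2) (Set.Ioi 0) := by
    intro x hx y hy hxy
    simp only
    rw [f_eq_H hx, f_eq_H hy]
    have := Hfun_anti (Set.mem_Ioi.mp hx) hxy
    linarith
  refine ⟨hmono, ?_⟩
  apply Set.eq_of_subset_of_subset
  · rintro z ⟨x, hx, rfl⟩
    have hx' : (0:ℝ) < x := hx
    simp only
    rw [f_eq_H hx']
    constructor
    · have := Hfun_lt hx'
      nlinarith
    · have := Hfun_pos hx'
      nlinarith
  · rintro y ⟨hy1, hy2⟩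
    set t := -y / 2 with ht
    have ht1 : 0 < t := by simp [ht]; linarith
    have ht2 : t < Real.pi ^ 2 / 6 := by
      rw [ht]; nlinarith
    -- find b with Hfun b < t
    obtain ⟨b, hb0, hbt⟩ : ∃ b : ℝ, 0 < b ∧ Hfun b < t := by
      have h := (Hfun_tendsto_atTop.eventually_lt_const ht1).and (eventually_gt_atTop 0)
      obtain ⟨b, hb1, hb2⟩ := h.exists
      exact ⟨b, hb2, hb1⟩
    -- find a with Hfun a > t
    obtain ⟨a, ha0, hat⟩ : ∃ a : ℝ, 0 < a ∧ t < Hfun a := by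
      have h := (Hfun_tendsto_zero.eventually_const_lt ht2).and self_mem_nhdsWithin
      obtain ⟨a, ha1, ha2⟩ := h.exists
      exact ⟨a, ha2, ha1⟩
    have hab : a < b := by
      by_contra h
      push_neg at h
      rcases eq_or_lt_of_le h with h' | h'
      · rw [h'] at hbt; linarith
      · have := Hfun_anti hb0 h'
        linarith
    have hsub : Set.Icc a b ⊆ Set.Ioi 0 := fun z hz => lt_of_lt_of_le ha0 hz.1
    have hcont : ContinuousOn Hfun (Set.Icc a b) := Hfun_continuousOn.mono hsub
    have hIVT := intermediate_value_Icc' hab.le hcont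
    have htmem : t ∈ Set.Icc (Hfun b) (Hfun a) := ⟨hbt.le, hat.le⟩
    obtain ⟨x, hx, hxt⟩ := hIVT htmem
    refine ⟨x, hsub hx, ?_⟩
    simp only
    rw [f_eq_H (hsub hx), hxt, ht]
    ring
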